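/- (Count-min lookup error bound.) Let v : Fin N → ℝ≥0 be a weighted set, let i ∈ Fin N, and suppose N_W > 2 · |supp(v)|. If the family H = (h_1,…,h_{N_D}) is drawn uniformly at random in the random-hash model, then the probability that the count-min lookup errs, i.e. that CM_H(i, S_H(v)) ≠ v i, is at most 1 / 2^{N_D}. -/

import Mathlib

open Finset

/-- The primitive sketch of a weighted set `v` under hash function `h`. -/
def sketch {N NW : ℕ} (h : Fin N → Fin NW) (v : Fin N → NNReal) : Fin NW → NNReal :=
  fun k => ∑ i ∈ Finset.univ.filter (fun i => h i = k), v i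

/-- The support of a weighted set, as a finset. -/
noncomputable def supp {N : ℕ} (v : Fin N → NNReal) : Finset (Fin N) :=
  Finset.univ.filter (fun i => v i ≠ 0)

/-- The count-min sketch of `v` under the family `H`: the `j`-th row is the
primitive sketch of `v` under `H j`. -/
def cmSketch {N NW ND : ℕ} (H : Fin ND → Fin N → Fin NW) (v : Fin N → NNReal) :
    Fin ND → Fin NW → NNReal :=
  fun j => sketch (H j) v

/-- The count-min lookup of `i` in an `ND × NW` matrix `M`, relative to the
family `H`: the minimum over `j` of `M[j, h_j(i)]`. -/
noncomputable def cmLookup {N NW ND : ℕ} (H : Fin ND → Fin N → Fin NW)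
    (M : Fin ND → Fin NW → NNReal) (i : Fin N) : NNReal :=
  ⨅ j, M j (H j i)

-- Row lower bound
lemma row_ge {N NW : ℕ} (h : Fin N → Fin NW) (v : Fin N → NNReal) (i : Fin N) :
    v i ≤ sketch h v (h i) := by
  classical
  exact Finset.single_le_sum (fun _ _ => zero_le) (by simp)

-- Row characterization
lemma row_ne_iff {N NW : ℕ} (h : Fin N → Fin NW) (v : Fin N → NNReal) (i : Fin N) :
    sketch h v (h i) ≠ v i ↔ ∃ i' ∈ (supp v).erase i, h i' = h i := by
  classical
  unfold sketch
  have hi : i ∈ Finset.univ.filter (fun i' => h i' = h i) := by simp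
  rw [← Finset.add_sum_erase _ v hi]
  constructor
  · intro hne
    have h0 : ∑ i' ∈ (Finset.univ.filter (fun i' => h i' = h i)).erase i, v i' ≠ 0 := by
      intro h0; apply hne; rw [h0, add_zero]
    rw [Ne, Finset.sum_eq_zero_iff] at h0
    push_neg at h0
    obtain ⟨i', hi', hv⟩ := h0
    simp only [Finset.mem_erase, Finset.mem_filter, Finset.mem_univ, true_and] at hi'
    exact ⟨i', by simp [supp, Finset.mem_erase, hi'.1, hv], hi'.2⟩
  · rintro ⟨i', hi', hh⟩
    simp only [supp, Finset.mem_erase, Finset.mem_filter, Finset.mem_univ, true_and] at hi'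
    intro heq
    have h0 : ∑ i'' ∈ (Finset.univ.filter (fun i'' => h i'' = h i)).erase i, v i'' = 0 := by
      have : v i + ∑ i'' ∈ (Finset.univ.filter (fun i'' => h i'' = h i)).erase i, v i''
          = v i + 0 := by rw [add_zero]; exact heq
      exact add_left_cancel this
    rw [Finset.sum_eq_zero_iff] at h0
    exact hi'.2 (h0 i' (by simp [Finset.mem_erase, hi'.1, hh]))

-- Error characterization
lemma err_iff {N NW ND : ℕ} (hND : 0 < ND) (H : Fin ND → Fin N → Fin NW)
    (v : Fin N → NNReal) (i : Fin N) :
    cmLookup H (cmSketch H v) i ≠ v i ↔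
      ∀ j, ∃ i' ∈ (supp v).erase i, H j i' = H j i := by
  classical
  have : Nonempty (Fin ND) := ⟨⟨0, hND⟩⟩
  unfold cmLookup cmSketch
  constructor
  · intro hne j
    rw [← row_ne_iff]
    intro heq
    apply hne
    apply le_antisymm
    · exact le_trans (ciInf_le' _ j) (le_of_eq heq)
    · exact le_ciInf fun j' => row_ge (H j') v i
  · intro hall heq
    obtain ⟨j0, hj0⟩ := Finite.exists_min (fun j => sketch (H j) v (H j i))
    have hmin : (⨅ j, sketch (H j) v (H j i)) = sketch (H j0) v (H j0 i) :=
      le_antisymm (ciInf_le' _ j0) (le_ciInf hj0)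
    have := (row_ne_iff (H j0) v i).2 (hall j0)
    exact this (hmin ▸ heq)

lemma count_pi {N NW ND : ℕ} (P : (Fin N → Fin NW) → Prop) [DecidablePred P] :
    (Finset.univ.filter (fun H : Fin ND → Fin N → Fin NW => ∀ j, P (H j))).card
      = (Finset.univ.filter P).card ^ ND := by
  classical
  rw [← Fintype.card_subtype, ← Fintype.card_subtype]
  rw [Fintype.card_congr (Equiv.subtypePiEquivPi (p := fun _ : Fin ND => P))]
  simp [Fintype.card_pi]

lemma count_collide {N NW : ℕ} (hN : 0 < N) (i i' : Fin N) (hne : i' ≠ i) :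
    (Finset.univ.filter (fun h : Fin N → Fin NW => h i' = h i)).card = NW ^ (N - 1) := by
  classical
  rw [← Fintype.card_subtype]
  have e : {h : Fin N → Fin NW // h i' = h i} ≃ ({j : Fin N // j ≠ i'} → Fin NW) :=
    { toFun := fun h j => h.1 j.1
      invFun := fun g => ⟨fun j => if hj : j = i' then g ⟨i, Ne.symm hne⟩ else g ⟨j, hj⟩, by
        simp [Ne.symm hne]⟩
      left_inv := by
        rintro ⟨h, hh⟩
        apply Subtype.ext
        funext j
        by_cases hj : j = i'
        · subst hj; simpa using hh.symm
        · simp [hj]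
      right_inv := by
        intro g
        funext j
        simp [j.2] }
  rw [Fintype.card_congr e, Fintype.card_fun]
  congr 1
  · simp
  · rw [Fintype.card_subtype_compl, Fintype.card_subtype_eq]
    simp

lemma count_bad {N NW : ℕ} (hN : 0 < N) (v : Fin N → NNReal) (i : Fin N)
    (hW : 2 * (supp v).card < NW) :
    2 * (Finset.univ.filter
        (fun h : Fin N → Fin NW => ∃ i' ∈ (supp v).erase i, h i' = h i)).card ≤ NW ^ N := by
  classical
  have hsub : (Finset.univ.filter
        (fun h : Fin N → Fin NW => ∃ i' ∈ (supp v).erase i, h i' = h i))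
      ⊆ ((supp v).erase i).biUnion
        (fun i' => Finset.univ.filter (fun h : Fin N → Fin NW => h i' = h i)) := by
    intro h hh
    simp only [Finset.mem_filter, Finset.mem_univ, true_and] at hh
    obtain ⟨i', hi', heq⟩ := hh
    exact Finset.mem_biUnion.2 ⟨i', hi', by simp [heq]⟩
  have h1 := (Finset.card_le_card hsub).trans (Finset.card_biUnion_le)
  have h2 : ∑ i' ∈ (supp v).erase i,
      (Finset.univ.filter (fun h : Fin N → Fin NW => h i' = h i)).card
      ≤ (supp v).card * NW ^ (N - 1) := by
    rw [Finset.sum_congr rfl (fun i' hi' =>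
      count_collide hN i i' (Finset.ne_of_mem_erase hi'))]
    rw [Finset.sum_const, smul_eq_mul]
    exact Nat.mul_le_mul_right _ (Finset.card_erase_le)
  have h3 : NW * NW ^ (N - 1) = NW ^ N := by
    rw [← pow_succ', Nat.sub_add_cancel hN]
  calc 2 * (Finset.univ.filter
        (fun h : Fin N → Fin NW => ∃ i' ∈ (supp v).erase i, h i' = h i)).card
      ≤ 2 * ((supp v).card * NW ^ (N - 1)) :=
        Nat.mul_le_mul_left _ (h1.trans h2)
    _ = (2 * (supp v).card) * NW ^ (N - 1) := by ring
    _ ≤ NW * NW ^ (N - 1) := Nat.mul_le_mul_right _ (le_of_lt hW)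
    _ = NW ^ N := h3

theorem prob_cmLookup_err_le
    {N NW ND : ℕ} (hN : 0 < N) (hNW : 0 < NW) (hND : 0 < ND)
    (v : Fin N → NNReal) (i : Fin N)
    (hW : 2 * (supp v).card < NW) :
    ((Finset.univ.filter (fun H : Fin ND → Fin N → Fin NW =>
        cmLookup H (cmSketch H v) i ≠ v i)).card : ℝ)
      / (Fintype.card (Fin ND → Fin N → Fin NW) : ℝ)
      ≤ 1 / 2 ^ ND := by
  classical
  set P : (Fin N → Fin NW) → Prop :=
    fun h => ∃ i' ∈ (supp v).erase i, h i' = h i with hP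
  have hfilter : (Finset.univ.filter (fun H : Fin ND → Fin N → Fin NW =>
        cmLookup H (cmSketch H v) i ≠ v i))
      = Finset.univ.filter (fun H : Fin ND → Fin N → Fin NW => ∀ j, P (H j)) := by
    apply Finset.filter_congr
    intro H _
    exact err_iff hND H v i
  set b := (Finset.univ.filter P).card with hb
  have hcard : (Finset.univ.filter (fun H : Fin ND → Fin N → Fin NW =>
        cmLookup H (cmSketch H v) i ≠ v i)).card = b ^ ND := by
    rw [hfilter]
    exact count_pi P
  have htot : (Fintype.card (Fin ND → Fin N → Fin NW)) = (NW ^ N) ^ ND := by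
    simp [Fintype.card_fun]
  have hbad : 2 * b ≤ NW ^ N := count_bad hN v i hW
  have hpos : (0:ℝ) < (NW ^ N : ℕ) := by positivity
  rw [hcard, htot]
  have hb2 : (b : ℝ) / ((NW ^ N : ℕ) : ℝ) ≤ 1 / 2 := by
    rw [div_le_div_iff₀ hpos (by norm_num)]
    have h4 : ((2 * b : ℕ) : ℝ) ≤ ((NW ^ N : ℕ) : ℝ) := Nat.cast_le.2 hbad
    push_cast at h4 ⊢
    linarith
  calc ((b ^ ND : ℕ) : ℝ) / (((NW ^ N) ^ ND : ℕ) : ℝ)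
      = ((b : ℝ) / ((NW ^ N : ℕ) : ℝ)) ^ ND := by
        push_cast
        rw [div_pow]
    _ ≤ (1 / 2) ^ ND := pow_le_pow_left₀ (by positivity) hb2 ND
    _ = 1 / 2 ^ ND := by rw [div_pow]; norm_num
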